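/- Let G be a cubic bipartite graph and let e, f ∈ E(G) be two edges such that every 3-edge-cut of G contains at most one of e and f. Then G has a perfect matching containing both e and f. -/

import Mathlib

open Finset SimpleGraph

attribute [local instance] Classical.propDecidable

variable {V : Type}

/-- `σ` is a valid `±1` signature on the edges of `G`. -/
def IsSignature (G : SimpleGraph V) (σ : Sym2 V → ℤ) : Prop :=
  ∀ e ∈ G.edgeSet, σ e = 1 ∨ σ e = -1

/-- The set of negative edges of the signed graph `(G, σ)`. -/
def NegEdges (G : SimpleGraph V) (σ : Sym2 V → ℤ) : Set (Sym2 V) :=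
  {e | e ∈ G.edgeSet ∧ σ e = -1}

/-- A bidirected orientation of the signed graph `(G, σ)`: `τ v e = 1` means that the
half-edge of `e` at `v` points towards `v`, and `τ v e = -1` that it points away from `v`.
On a positive edge the two half-edges are directed consistently, while on a negative edge
both half-edges point outwards (extroverted) or both point inwards (introverted). -/
def IsOrientation (G : SimpleGraph V) (σ : Sym2 V → ℤ) (τ : V → Sym2 V → ℤ) : Prop :=
  (∀ v e, τ v e = 1 ∨ τ v e = -1) ∧
  ∀ u v, G.Adj u v → τ u s(u, v) * τ v s(u, v) = - σ s(u, v)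

/-- `(τ, φ)` is an integer-valued flow on the signed graph `(G, σ)`:
Kirchhoff's law holds at every vertex. -/
def IsFlow [Fintype V] (G : SimpleGraph V) (σ : Sym2 V → ℤ)
    (τ : V → Sym2 V → ℤ) (φ : Sym2 V → ℤ) : Prop :=
  IsOrientation G σ τ ∧
    ∀ v : V, (∑ w : V, if G.Adj v w then τ v s(v, w) * φ s(v, w) else 0) = 0

/-- `(τ, φ)` is a nowhere-zero `k`-flow on `(G, σ)`. -/
def IsNZFlow [Fintype V] (G : SimpleGraph V) (σ : Sym2 V → ℤ) (k : ℤ)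
    (τ : V → Sym2 V → ℤ) (φ : Sym2 V → ℤ) : Prop :=
  IsFlow G σ τ φ ∧ ∀ e ∈ G.edgeSet, 0 < |φ e| ∧ |φ e| < k

/-- A signed graph is flow-admissible if it admits a nowhere-zero `k`-flow for some `k`. -/
def FlowAdmissible [Fintype V] (G : SimpleGraph V) (σ : Sym2 V → ℤ) : Prop :=
  ∃ (k : ℤ) (τ : V → Sym2 V → ℤ) (φ : Sym2 V → ℤ), IsNZFlow G σ k τ φ

/-- The flow number `F(G, σ)`: the least `k` admitting a nowhere-zero `k`-flow. -/
noncomputable def flowNumber [Fintype V] (G : SimpleGraph V) (σ : Sym2 V → ℤ) : ℕ :=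
  sInf {k : ℕ | ∃ τ φ, IsNZFlow G σ (k : ℤ) τ φ}

/-- An edge-cut of `G`: the set of edges crossing a nontrivial vertex partition. -/
def IsEdgeCut (G : SimpleGraph V) (X : Set (Sym2 V)) : Prop :=
  ∃ S : Set V, S.Nonempty ∧ Sᶜ.Nonempty ∧
    X = {e | e ∈ G.edgeSet ∧ ∃ a ∈ S, ∃ b ∈ Sᶜ, e = s(a, b)}

/-- The all-positive signature. -/
def allPos : Sym2 V → ℤ := fun _ => 1

/-- `G` is cubic (3-regular). -/
def CubicGraph (G : SimpleGraph V) : Prop := ∀ v : V, (G.neighborSet v).ncard = 3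

/-- `G` has no bridge. -/
def Bridgeless (G : SimpleGraph V) : Prop := ∀ e ∈ G.edgeSet, ¬ G.IsBridge e

/-- A walk is directed (with respect to the orientation `τ` of `(G, σ)`) if every dart of
the walk traverses a positive edge in the direction of its orientation. -/
def IsDirectedWalk {G : SimpleGraph V} (σ : Sym2 V → ℤ) (τ : V → Sym2 V → ℤ) {u v : V}
    (p : G.Walk u v) : Prop :=
  ∀ d ∈ p.darts, σ s(d.toProd.1, d.toProd.2) = 1 ∧
    τ d.toProd.2 s(d.toProd.1, d.toProd.2) = 1

/-- `M` is a perfect matching (1-factor) of `G`. -/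
def IsPM (G : SimpleGraph V) (M : Set (Sym2 V)) : Prop :=
  M ⊆ G.edgeSet ∧ ∀ v : V, ∃! e, e ∈ M ∧ v ∈ e

/-- `c` is a proper 3-edge-coloring of `G`. -/
def IsProper3EdgeColoring (G : SimpleGraph V) (c : Sym2 V → Fin 3) : Prop :=
  ∀ e₁ ∈ G.edgeSet, ∀ e₂ ∈ G.edgeSet, e₁ ≠ e₂ → (∃ w, w ∈ e₁ ∧ w ∈ e₂) → c e₁ ≠ c e₂


lemma stmt6_count [Fintype V] [DecidableEq V] (G : SimpleGraph V) [DecidableRel G.Adj]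
    (S T : Finset V) (h : ∀ a ∈ S, G.neighborFinset a ⊆ T) :
    ∑ a ∈ S, (G.neighborFinset a).card = ∑ b ∈ T, ((G.neighborFinset b) ∩ S).card := by
  have h1 : ∀ a ∈ S, (G.neighborFinset a).card = ∑ b ∈ T, if G.Adj a b then 1 else 0 := by
    intro a ha
    rw [← Finset.card_filter]
    congr 1
    ext b
    simp only [mem_filter, mem_neighborFinset]
    exact ⟨fun hb => ⟨h a ha (by simpa [mem_neighborFinset]), hb⟩, fun hb => hb.2⟩
  have h2 : ∀ b : V, ((G.neighborFinset b) ∩ S).card = ∑ a ∈ S, if G.Adj a b then 1 else 0 := by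
    intro b
    rw [← Finset.card_filter]
    congr 1
    ext a
    simp [mem_filter, mem_inter, mem_neighborFinset, G.adj_comm, and_comm]
  rw [Finset.sum_congr rfl h1, Finset.sum_comm, Finset.sum_congr rfl fun b _ => (h2 b).symm]

lemma stmt6_hall [Fintype V] (G : SimpleGraph V) (C : G.Coloring (Fin 2))
    (hdeg : ∀ v : V, (G.neighborFinset v).card = 3)
    (a₁ b₁ a₂ b₂ : V) (hab1 : G.Adj a₁ b₁) (hab2 : G.Adj a₂ b₂)
    (hA1 : C a₁ = 0) (hB1 : C b₁ = 1) (hA2 : C a₂ = 0) (hB2 : C b₂ = 1)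
    (hcut : ∀ X, IsEdgeCut G X → X.ncard = 3 → ¬ (s(a₁, b₁) ∈ X ∧ s(a₂, b₂) ∈ X))
    (A' : Finset V) (hA' : ∀ x ∈ A', C x = 0 ∧ x ≠ a₁ ∧ x ≠ a₂) :
    ∀ s : Finset {x // x ∈ A'},
      s.card ≤ (s.biUnion (fun a => G.neighborFinset a.1 \ {b₁, b₂})).card := by
  classical
  have h01 : ∀ i : Fin 2, i = 0 ∨ i = 1 := by decide
  have hO : ∀ u v : V, G.Adj u v → C u = 0 → C v = 1 := by
    intro u v huv h0
    rcases h01 (C v) with h | h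
    · exact absurd (h0.trans h.symm) (C.valid huv)
    · exact h
  have hO' : ∀ u v : V, G.Adj u v → C u = 1 → C v = 0 := by
    intro u v huv h1
    rcases h01 (C v) with h | h
    · exact h
    · exact absurd (h1.trans h.symm) (C.valid huv)
  intro s
  by_contra hlt
  push_neg at hlt
  set S : Finset V := s.image Subtype.val with hSdef
  have hScard : S.card = s.card := card_image_of_injective s Subtype.val_injective
  set N : Finset V := S.biUnion (fun a => G.neighborFinset a) with hNdef
  have hbiU : s.biUnion (fun a => G.neighborFinset a.1 \ {b₁, b₂}) = N \ ({b₁, b₂} : Finset V) := by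
    ext w
    simp only [mem_biUnion, mem_sdiff, hNdef, hSdef, mem_image]
    constructor
    · rintro ⟨a, has, hw, hnb⟩
      exact ⟨⟨a.1, ⟨a, has, rfl⟩, hw⟩, hnb⟩
    · rintro ⟨⟨x, ⟨a, has, rfl⟩, hw⟩, hnb⟩
      exact ⟨a, has, hw, hnb⟩
  rw [hbiU] at hlt
  replace hlt : (N \ ({b₁, b₂} : Finset V)).card < S.card := by rw [hScard]; exact hlt
  have hSmem : ∀ x ∈ S, C x = 0 ∧ x ≠ a₁ ∧ x ≠ a₂ := by
    intro x hx
    rw [hSdef, mem_image] at hx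
    obtain ⟨a, -, rfl⟩ := hx
    exact hA' a.1 a.2
  have hNmem : ∀ x ∈ N, C x = 1 := by
    intro x hx
    rw [hNdef, mem_biUnion] at hx
    obtain ⟨a, ha, hx⟩ := hx
    exact hO a x ((mem_neighborFinset _ _ _).mp hx) (hSmem a ha).1
  have hSsubN : ∀ a ∈ S, G.neighborFinset a ⊆ N := by
    intro a ha x hx
    rw [hNdef, mem_biUnion]
    exact ⟨a, ha, hx⟩
  have hsum : ∑ a ∈ S, (G.neighborFinset a).card = ∑ b ∈ N, ((G.neighborFinset b) ∩ S).card :=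
    stmt6_count G S N hSsubN
  have hsumS : ∑ a ∈ S, (G.neighborFinset a).card = 3 * S.card := by
    rw [Finset.sum_congr rfl fun a _ => hdeg a, sum_const, smul_eq_mul, mul_comm]
  have hterm : ∀ b ∈ N, ((G.neighborFinset b) ∩ S).card ≤ 3 := by
    intro b _
    calc ((G.neighborFinset b) ∩ S).card ≤ (G.neighborFinset b).card :=
          card_le_card inter_subset_left
      _ = 3 := hdeg b
  have hle : 3 * S.card ≤ 3 * N.card := by
    rw [← hsumS, hsum]
    calc ∑ b ∈ N, ((G.neighborFinset b) ∩ S).card ≤ ∑ _b ∈ N, 3 := sum_le_sum hterm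
      _ = 3 * N.card := by rw [sum_const, smul_eq_mul, mul_comm]
  have hSN : S.card ≤ N.card := by omega
  have hNle : N.card ≤ (N \ ({b₁, b₂} : Finset V)).card + 2 := by
    have hsub : N ⊆ (N \ ({b₁, b₂} : Finset V)) ∪ {b₁, b₂} := by
      intro x hx
      by_cases hxb : x ∈ ({b₁, b₂} : Finset V)
      · exact mem_union_right _ hxb
      · exact mem_union_left _ (mem_sdiff.mpr ⟨hx, hxb⟩)
    calc N.card ≤ ((N \ ({b₁, b₂} : Finset V)) ∪ {b₁, b₂}).card := card_le_card hsub
      _ ≤ (N \ ({b₁, b₂} : Finset V)).card + ({b₁, b₂} : Finset V).card := card_union_le _ _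
      _ ≤ (N \ ({b₁, b₂} : Finset V)).card + 2 := by
          have := card_insert_le b₁ ({b₂} : Finset V)
          simp only [card_singleton] at this
          omega
  by_cases hcase : N.card ≤ S.card
  · -- |N| = |S| : every b ∈ N has all neighbors in S; some bᵢ ∈ N gives aᵢ ∈ S, contradiction
    have hall3 : ∀ b ∈ N, ((G.neighborFinset b) ∩ S).card = 3 := by
      by_contra hc
      push_neg at hc
      obtain ⟨b, hbN, hb3⟩ := hc
      have hblt : ((G.neighborFinset b) ∩ S).card < 3 := lt_of_le_of_ne (hterm b hbN) hb3
      have : ∑ b ∈ N, ((G.neighborFinset b) ∩ S).card < ∑ _b ∈ N, 3 :=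
        Finset.sum_lt_sum hterm ⟨b, hbN, hblt⟩
      rw [sum_const, smul_eq_mul, mul_comm] at this
      omega
    have hsubS : ∀ b ∈ N, G.neighborFinset b ⊆ S := by
      intro b hb
      have hEq : (G.neighborFinset b) ∩ S = G.neighborFinset b := by
        apply eq_of_subset_of_card_le inter_subset_left
        rw [hall3 b hb, hdeg b]
      exact (inter_eq_left.mp hEq)
    have hbmem : b₁ ∈ N ∨ b₂ ∈ N := by
      by_contra hbm
      push_neg at hbm
      have : N \ ({b₁, b₂} : Finset V) = N := by
        apply sdiff_eq_self_of_disjoint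
        rw [disjoint_right]
        intro x hx
        simp only [mem_insert, mem_singleton] at hx
        rcases hx with rfl | rfl
        · exact hbm.1
        · exact hbm.2
      rw [this] at hlt
      omega
    rcases hbmem with hb | hb
    · have ha : a₁ ∈ S := hsubS b₁ hb ((mem_neighborFinset _ _ _).mpr hab1.symm)
      exact (hSmem a₁ ha).2.1 rfl
    · have ha : a₂ ∈ S := hsubS b₂ hb ((mem_neighborFinset _ _ _).mpr hab2.symm)
      exact (hSmem a₂ ha).2.2 rfl
  · -- |N| = |S| + 1 : both b₁, b₂ ∈ N, and we exhibit a 3-edge-cut containing both edges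
    push_neg at hcase
    have hNcard : N.card = S.card + 1 := by omega
    have hbothN : b₁ ∈ N ∧ b₂ ∈ N := by
      constructor
      · by_contra hb1
        have hss : N \ ({b₂} : Finset V) ⊆ N \ ({b₁, b₂} : Finset V) := by
          intro x hx
          rw [mem_sdiff] at hx ⊢
          refine ⟨hx.1, ?_⟩
          simp only [mem_insert, mem_singleton]
          rintro (rfl | rfl)
          · exact hb1 hx.1
          · exact hx.2 (mem_singleton_self _)
        have h1 : N.card ≤ (N \ ({b₂} : Finset V)).card + 1 := by
          have : N ⊆ (N \ ({b₂} : Finset V)) ∪ {b₂} := by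
            intro x hx
            by_cases hxb : x ∈ ({b₂} : Finset V)
            · exact mem_union_right _ hxb
            · exact mem_union_left _ (mem_sdiff.mpr ⟨hx, hxb⟩)
          calc N.card ≤ _ := card_le_card this
            _ ≤ (N \ ({b₂} : Finset V)).card + 1 := by
                have := card_union_le (N \ ({b₂} : Finset V)) ({b₂} : Finset V)
                simp only [card_singleton] at this
                omega
        have h2 := card_le_card hss
        omega
      · by_contra hb2
        have hss : N \ ({b₁} : Finset V) ⊆ N \ ({b₁, b₂} : Finset V) := by
          intro x hx
          rw [mem_sdiff] at hx ⊢
          refine ⟨hx.1, ?_⟩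
          simp only [mem_insert, mem_singleton]
          rintro (rfl | rfl)
          · exact hx.2 (mem_singleton_self _)
          · exact hb2 hx.1
        have h1 : N.card ≤ (N \ ({b₁} : Finset V)).card + 1 := by
          have : N ⊆ (N \ ({b₁} : Finset V)) ∪ {b₁} := by
            intro x hx
            by_cases hxb : x ∈ ({b₁} : Finset V)
            · exact mem_union_right _ hxb
            · exact mem_union_left _ (mem_sdiff.mpr ⟨hx, hxb⟩)
          calc N.card ≤ _ := card_le_card this
            _ ≤ (N \ ({b₁} : Finset V)).card + 1 := by
                have := card_union_le (N \ ({b₁} : Finset V)) ({b₁} : Finset V)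
                simp only [card_singleton] at this
                omega
        have h2 := card_le_card hss
        omega
    obtain ⟨hb1N, hb2N⟩ := hbothN
    have hsumN : ∑ b ∈ N, ((G.neighborFinset b) ∩ S).card = 3 * S.card := hsum ▸ hsumS
    -- the 3-edge-cut
    set X' : Finset (Sym2 V) :=
      N.biUnion (fun b => ((G.neighborFinset b) \ S).image (fun a => s(b, a))) with hX'def
    have himgcard : ∀ b ∈ N,
        (((G.neighborFinset b) \ S).image (fun a => s(b, a))).card
          = 3 - ((G.neighborFinset b) ∩ S).card := by
      intro b hb
      rw [Finset.card_image_of_injOn]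
      · have h1 := Finset.card_inter_add_card_sdiff (G.neighborFinset b) S
        rw [hdeg b] at h1
        omega
      · intro x hx y hy hxy
        rcases Sym2.eq_iff.mp hxy with ⟨-, h⟩ | ⟨h1, h2⟩
        · exact h
        · exfalso
          have : G.Adj b y := (mem_neighborFinset _ _ _).mp (mem_sdiff.mp (mem_coe.mp hy)).1
          exact G.ne_of_adj this h1
    have hdisj : (N : Set V).PairwiseDisjoint
        (fun b => ((G.neighborFinset b) \ S).image (fun a => s(b, a))) := by
      intro b hb b' hb' hne
      rw [Function.onFun, Finset.disjoint_left]
      intro g hg hg'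
      rw [mem_image] at hg hg'
      obtain ⟨x, hx, rfl⟩ := hg
      obtain ⟨y, hy, hxy⟩ := hg'
      rcases Sym2.eq_iff.mp hxy.symm with ⟨h1, -⟩ | ⟨h1, h2⟩
      · exact hne h1
      · have hCy : C y = 0 := hO' b' y ((mem_neighborFinset _ _ _).mp (mem_sdiff.mp hy).1)
          (hNmem b' (mem_coe.mp hb'))
        have hCb : C b = 1 := hNmem b (mem_coe.mp hb)
        rw [h1, hCy] at hCb
        exact absurd hCb (by decide)
    have hXcard : X'.card = 3 := by
      rw [hX'def, card_biUnion hdisj, Finset.sum_congr rfl himgcard]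
      have hsplit : ∑ b ∈ N, (3 - ((G.neighborFinset b) ∩ S).card)
          + ∑ b ∈ N, ((G.neighborFinset b) ∩ S).card = 3 * N.card := by
        rw [← Finset.sum_add_distrib]
        rw [Finset.sum_congr rfl fun b hb => Nat.sub_add_cancel (hterm b hb), sum_const,
          smul_eq_mul, mul_comm]
      omega
    -- apply hcut
    have hW : ∀ x : V, x ∈ (↑(S ∪ N) : Set V) ↔ x ∈ S ∨ x ∈ N := by
      intro x; simp [mem_union]
    have hXset : (↑X' : Set (Sym2 V)) =
        {g | g ∈ G.edgeSet ∧ ∃ u ∈ (↑(S ∪ N) : Set V), ∃ w ∈ (↑(S ∪ N) : Set V)ᶜ, g = s(u, w)} := by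
      ext g
      simp only [Set.mem_setOf_eq, mem_coe, hX'def, mem_biUnion, mem_image, Set.mem_compl_iff,
        mem_union]
      constructor
      · rintro ⟨b, hbN, a, ha, rfl⟩
        rw [mem_sdiff, mem_neighborFinset] at ha
        refine ⟨G.mem_edgeSet.mpr ha.1, b, Or.inr hbN, a, ?_, rfl⟩
        rintro (haS | haN)
        · exact ha.2 haS
        · have h0 : C a = 0 := hO' b a ha.1 (hNmem b hbN)
          have h1 : C a = 1 := hNmem a haN
          rw [h0] at h1; exact absurd h1 (by decide)
      · rintro ⟨hg, u, hu, w, hw, rfl⟩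
        have hadj : G.Adj u w := G.mem_edgeSet.mp hg
        rcases hu with huS | huN
        · exact absurd (Or.inr (hSsubN u huS ((mem_neighborFinset _ _ _).mpr hadj))) hw
        · refine ⟨u, huN, w, ?_, rfl⟩
          rw [mem_sdiff, mem_neighborFinset]
          exact ⟨hadj, fun hwS => hw (Or.inl hwS)⟩
    refine hcut (↑X' : Set (Sym2 V)) ⟨(↑(S ∪ N) : Set V), ⟨b₁, (hW b₁).mpr (Or.inr hb1N)⟩,
      ⟨a₁, ?_⟩, hXset⟩ (by rw [Set.ncard_coe_finset, hXcard]) ⟨?_, ?_⟩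
    · rw [Set.mem_compl_iff, hW]
      rintro (h | h)
      · exact (hSmem a₁ h).2.1 rfl
      · have := hNmem a₁ h; rw [hA1] at this; exact absurd this (by decide)
    · rw [mem_coe, hX'def, mem_biUnion]
      refine ⟨b₁, hb1N, ?_⟩
      rw [mem_image]
      refine ⟨a₁, ?_, Sym2.eq_swap⟩
      rw [mem_sdiff, mem_neighborFinset]
      exact ⟨hab1.symm, fun h => (hSmem a₁ h).2.1 rfl⟩
    · rw [mem_coe, hX'def, mem_biUnion]
      refine ⟨b₂, hb2N, ?_⟩
      rw [mem_image]
      refine ⟨a₂, ?_, Sym2.eq_swap⟩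
      rw [mem_sdiff, mem_neighborFinset]
      exact ⟨hab2.symm, fun h => (hSmem a₂ h).2.2 rfl⟩

/-- A cubic bipartite graph has a perfect matching through any two edges
that do not lie together in a 3-edge-cut. -/
theorem stmt6 [Fintype V] (G : SimpleGraph V) (hcubic : CubicGraph G)
    (hbip : G.Colorable 2)
    (e f : Sym2 V) (he : e ∈ G.edgeSet) (hf : f ∈ G.edgeSet)
    (hcut : ∀ X, IsEdgeCut G X → X.ncard = 3 → ¬ (e ∈ X ∧ f ∈ X)) :
    ∃ M, IsPM G M ∧ e ∈ M ∧ f ∈ M := by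
  classical
  obtain ⟨C⟩ := hbip
  have h01 : ∀ i : Fin 2, i = 0 ∨ i = 1 := by decide
  have hO : ∀ u v : V, G.Adj u v → C u = 0 → C v = 1 := by
    intro u v huv h0
    rcases h01 (C v) with h | h
    · exact absurd (h0.trans h.symm) (C.valid huv)
    · exact h
  have hO' : ∀ u v : V, G.Adj u v → C u = 1 → C v = 0 := by
    intro u v huv h1
    rcases h01 (C v) with h | h
    · exact h
    · exact absurd (h1.trans h.symm) (C.valid huv)
  have hdeg : ∀ v : V, (G.neighborFinset v).card = 3 := by
    intro v
    have h : (G.neighborSet v).toFinset.card = 3 := by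
      rw [← Set.ncard_eq_toFinset_card']; exact hcubic v
    rwa [neighborFinset_def]
  -- e and f share no vertex
  have hshare : ∀ v, v ∈ e → v ∈ f → False := by
    intro v hve hvf
    have hnb : ∃ w, G.Adj v w := by
      have h3 := hdeg v
      have hne : (G.neighborFinset v).Nonempty := by rw [← Finset.card_pos, h3]; norm_num
      obtain ⟨w, hw⟩ := hne
      exact ⟨w, (mem_neighborFinset _ _ _).mp hw⟩
    obtain ⟨w₀, hw₀⟩ := hnb
    set X : Set (Sym2 V) :=
      {g | g ∈ G.edgeSet ∧ ∃ a ∈ ({v} : Set V), ∃ b ∈ ({v} : Set V)ᶜ, g = s(a, b)} with hX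
    have hXeq : X = ↑((G.neighborFinset v).image (fun w => s(v, w))) := by
      ext g
      simp only [hX, Set.mem_setOf_eq, coe_image, Set.mem_image, mem_coe, mem_neighborFinset,
        Set.mem_singleton_iff, Set.mem_compl_iff]
      constructor
      · rintro ⟨hg, a, rfl, b, hb, rfl⟩
        exact ⟨b, G.mem_edgeSet.mp hg, rfl⟩
      · rintro ⟨w, hw, rfl⟩
        exact ⟨G.mem_edgeSet.mpr hw, v, rfl, w, fun h => G.ne_of_adj hw h.symm, rfl⟩
    have hmem : ∀ g ∈ G.edgeSet, v ∈ g → g ∈ X := by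
      intro g hg hvg
      obtain ⟨b, hb⟩ : ∃ b, g = s(v, b) := ⟨Sym2.Mem.other hvg, (Sym2.other_spec hvg).symm⟩
      subst hb
      have hadj : G.Adj v b := G.mem_edgeSet.mp hg
      exact ⟨hg, v, rfl, b, fun h => G.ne_of_adj hadj h.symm, rfl⟩
    refine hcut X ⟨{v}, ⟨v, rfl⟩, ⟨w₀, fun h => G.ne_of_adj hw₀ (Set.mem_singleton_iff.mp h).symm⟩,
      rfl⟩ ?_ ⟨hmem e he hve, hmem f hf hvf⟩
    rw [hXeq, Set.ncard_coe_finset, Finset.card_image_of_injOn, hdeg v]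
    intro x hx y hy hxy
    rcases Sym2.eq_iff.mp hxy with ⟨-, h⟩ | ⟨h1, h2⟩
    · exact h
    · exact absurd h1 (G.ne_of_adj ((mem_neighborFinset _ _ _).mp (mem_coe.mp hy)))
  -- endpoints of e and f, oriented by color
  have key : ∀ z : Sym2 V, z ∈ G.edgeSet → ∃ x y, G.Adj x y ∧ z = s(x, y) := by
    intro z
    induction z using Sym2.ind with
    | _ x y => exact fun hz => ⟨x, y, G.mem_edgeSet.mp hz, rfl⟩
  have pick : ∀ x y : V, G.Adj x y →
      ∃ a b, G.Adj a b ∧ C a = 0 ∧ C b = 1 ∧ s(x, y) = s(a, b) := by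
    intro x y hxy
    rcases h01 (C x) with hcx | hcx
    · exact ⟨x, y, hxy, hcx, hO x y hxy hcx, rfl⟩
    · exact ⟨y, x, hxy.symm, hO' x y hxy hcx, hcx, Sym2.eq_swap⟩
  obtain ⟨x₁, y₁, hxy₁, hex⟩ := key e he
  obtain ⟨a₁, b₁, hab1, hA1, hB1, hes⟩ := pick x₁ y₁ hxy₁
  have he1 : e = s(a₁, b₁) := hex.trans hes
  obtain ⟨x₂, y₂, hxy₂, hfx⟩ := key f hf
  obtain ⟨a₂, b₂, hab2, hA2, hB2, hfs⟩ := pick x₂ y₂ hxy₂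
  have hf1 : f = s(a₂, b₂) := hfx.trans hfs
  -- distinctness
  have hea : a₁ ∈ e := by rw [he1]; exact Sym2.mem_iff.mpr (Or.inl rfl)
  have heb : b₁ ∈ e := by rw [he1]; exact Sym2.mem_iff.mpr (Or.inr rfl)
  have hne_aa : a₁ ≠ a₂ := fun h =>
    hshare a₁ hea (by rw [hf1]; exact Sym2.mem_iff.mpr (Or.inl h))
  have hne_bb : b₁ ≠ b₂ := fun h =>
    hshare b₁ heb (by rw [hf1]; exact Sym2.mem_iff.mpr (Or.inr h))
  have hne01 : ∀ u w : V, C u = 0 → C w = 1 → u ≠ w := by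
    intro u w hu hw h
    rw [h, hw] at hu
    exact absurd hu (by decide)
  have hA : ∀ v : V, C v = 0 → v ∈ Finset.univ.filter (fun v => C v = 0) := fun v hv =>
    mem_filter.mpr ⟨mem_univ _, hv⟩
  set A : Finset V := Finset.univ.filter (fun v => C v = 0) with hAdef
  set B : Finset V := Finset.univ.filter (fun v => C v = 1) with hBdef
  have hAmem : ∀ v : V, v ∈ A ↔ C v = 0 := by intro v; simp [hAdef]
  have hBmem : ∀ v : V, v ∈ B ↔ C v = 1 := by intro v; simp [hBdef]
  have hABcard : A.card = B.card := by
    have hsubAB : ∀ a ∈ A, G.neighborFinset a ⊆ B := by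
      intro a ha w hw
      exact (hBmem w).mpr (hO a w ((mem_neighborFinset _ _ _).mp hw) ((hAmem a).mp ha))
    have hsubBA : ∀ b ∈ B, G.neighborFinset b ⊆ A := by
      intro b hb w hw
      exact (hAmem w).mpr (hO' b w ((mem_neighborFinset _ _ _).mp hw) ((hBmem b).mp hb))
    have h := stmt6_count G A B hsubAB
    have hL : ∑ a ∈ A, (G.neighborFinset a).card = 3 * A.card := by
      rw [Finset.sum_congr rfl fun a _ => hdeg a, sum_const, smul_eq_mul, mul_comm]
    have hR : ∑ b ∈ B, ((G.neighborFinset b) ∩ A).card = 3 * B.card := by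
      rw [Finset.sum_congr rfl fun b hb => by rw [inter_eq_left.mpr (hsubBA b hb), hdeg b],
        sum_const, smul_eq_mul, mul_comm]
    rw [hL, hR] at h
    omega
  set A' : Finset V := A \ {a₁, a₂} with hA'def
  set B' : Finset V := B \ {b₁, b₂} with hB'def
  have hsubaA : ({a₁, a₂} : Finset V) ⊆ A := by
    intro x hx
    rcases mem_insert.mp hx with rfl | hx
    · exact (hAmem _).mpr hA1
    · rw [mem_singleton] at hx; subst hx; exact (hAmem _).mpr hA2
  have hsubbB : ({b₁, b₂} : Finset V) ⊆ B := by
    intro x hx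
    rcases mem_insert.mp hx with rfl | hx
    · exact (hBmem _).mpr hB1
    · rw [mem_singleton] at hx; subst hx; exact (hBmem _).mpr hB2
  have hcard2a : ({a₁, a₂} : Finset V).card = 2 := by
    rw [card_insert_of_notMem (by rw [mem_singleton]; exact hne_aa), card_singleton]
  have hcard2b : ({b₁, b₂} : Finset V).card = 2 := by
    rw [card_insert_of_notMem (by rw [mem_singleton]; exact hne_bb), card_singleton]
  have hA'card : A'.card + 2 = A.card := by
    have h1 := card_sdiff_of_subset hsubaA
    have h2 := card_le_card hsubaA
    rw [← hA'def] at h1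
    rw [hcard2a] at h1 h2
    omega
  have hB'card : B'.card + 2 = B.card := by
    have h1 := card_sdiff_of_subset hsubbB
    have h2 := card_le_card hsubbB
    rw [← hB'def] at h1
    rw [hcard2b] at h1 h2
    omega
  have hA'mem : ∀ x ∈ A', C x = 0 ∧ x ≠ a₁ ∧ x ≠ a₂ := by
    intro x hx
    rw [hA'def, mem_sdiff] at hx
    refine ⟨(hAmem x).mp hx.1, ?_, ?_⟩
    · intro h; exact hx.2 (by rw [h]; exact mem_insert_self _ _)
    · intro h; exact hx.2 (by rw [h]; exact mem_insert_of_mem (mem_singleton_self _))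
  have hcut' : ∀ X, IsEdgeCut G X → X.ncard = 3 → ¬ (s(a₁, b₁) ∈ X ∧ s(a₂, b₂) ∈ X) := by
    intro X hX h3 ⟨h1, h2⟩
    exact hcut X hX h3 ⟨by rw [he1]; exact h1, by rw [hf1]; exact h2⟩
  have hall := stmt6_hall G C hdeg a₁ b₁ a₂ b₂ hab1 hab2 hA1 hB1 hA2 hB2 hcut' A' hA'mem
  obtain ⟨m, hminj, hmmem⟩ := (Finset.all_card_le_biUnion_card_iff_exists_injective
    (fun a : {x // x ∈ A'} => G.neighborFinset a.1 \ {b₁, b₂})).mp hall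
  have hm : ∀ a : {x // x ∈ A'}, G.Adj a.1 (m a) ∧ m a ≠ b₁ ∧ m a ≠ b₂ := by
    intro a
    have h := hmmem a
    rw [mem_sdiff, mem_neighborFinset] at h
    have h2 := h.2
    simp only [mem_insert, mem_singleton] at h2
    push_neg at h2
    exact ⟨h.1, h2.1, h2.2⟩
  have hmB : ∀ a : {x // x ∈ A'}, C (m a) = 1 := fun a =>
    hO a.1 (m a) (hm a).1 (hA'mem a.1 a.2).1
  have hA'0 : ∀ a : {x // x ∈ A'}, C a.1 = 0 := fun a => (hA'mem a.1 a.2).1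
  -- surjectivity onto B'
  have himg : (Finset.univ.image m : Finset V) = B' := by
    apply eq_of_subset_of_card_le
    · intro b hb
      rw [mem_image] at hb
      obtain ⟨a, -, rfl⟩ := hb
      rw [hB'def, mem_sdiff]
      refine ⟨(hBmem _).mpr (hmB a), ?_⟩
      simp only [mem_insert, mem_singleton]
      push_neg
      exact ⟨(hm a).2.1, (hm a).2.2⟩
    · rw [card_image_of_injective _ hminj, card_univ, Fintype.card_coe]
      omega
  have hsurj : ∀ b ∈ B', ∃ a : {x // x ∈ A'}, m a = b := by
    intro b hb
    rw [← himg, mem_image] at hb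
    obtain ⟨a, -, h⟩ := hb
    exact ⟨a, h⟩
  -- the matching
  refine ⟨{g | g = s(a₁, b₁) ∨ g = s(a₂, b₂) ∨ ∃ a : {x // x ∈ A'}, g = s(a.1, m a)},
    ⟨?_, ?_⟩, Or.inl he1, Or.inr (Or.inl hf1)⟩
  · rintro g (rfl | rfl | ⟨a, rfl⟩)
    · exact G.mem_edgeSet.mpr hab1
    · exact G.mem_edgeSet.mpr hab2
    · exact G.mem_edgeSet.mpr (hm a).1
  · intro v
    rcases h01 (C v) with h0 | h1
    · by_cases hv1 : v = a₁
      · refine ⟨s(a₁, b₁), ⟨Or.inl rfl, Sym2.mem_iff.mpr (Or.inl hv1)⟩, ?_⟩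
        rintro g ⟨(rfl | rfl | ⟨a, rfl⟩), hvg⟩
        · rfl
        · exfalso
          rcases Sym2.mem_iff.mp hvg with h | h
          · exact hne_aa ((hv1.symm.trans h))
          · exact hne01 v b₂ h0 hB2 h
        · exfalso
          rcases Sym2.mem_iff.mp hvg with h | h
          · exact (hA'mem a.1 a.2).2.1 (h.symm.trans hv1)
          · exact hne01 v (m a) h0 (hmB a) h
      · by_cases hv2 : v = a₂
        · refine ⟨s(a₂, b₂), ⟨Or.inr (Or.inl rfl), Sym2.mem_iff.mpr (Or.inl hv2)⟩, ?_⟩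
          rintro g ⟨(rfl | rfl | ⟨a, rfl⟩), hvg⟩
          · exfalso
            rcases Sym2.mem_iff.mp hvg with h | h
            · exact hne_aa (h.symm.trans hv2)
            · exact hne01 v b₁ h0 hB1 h
          · rfl
          · exfalso
            rcases Sym2.mem_iff.mp hvg with h | h
            · exact (hA'mem a.1 a.2).2.2 (h.symm.trans hv2)
            · exact hne01 v (m a) h0 (hmB a) h
        · have hvA' : v ∈ A' := by
            rw [hA'def, mem_sdiff]
            refine ⟨(hAmem v).mpr h0, ?_⟩
            simp only [mem_insert, mem_singleton]
            push_neg
            exact ⟨hv1, hv2⟩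
          refine ⟨s(v, m ⟨v, hvA'⟩), ⟨Or.inr (Or.inr ⟨⟨v, hvA'⟩, rfl⟩),
            Sym2.mem_iff.mpr (Or.inl rfl)⟩, ?_⟩
          rintro g ⟨(rfl | rfl | ⟨a', rfl⟩), hvg⟩
          · exfalso
            rcases Sym2.mem_iff.mp hvg with h | h
            · exact hv1 h
            · exact hne01 v b₁ h0 hB1 h
          · exfalso
            rcases Sym2.mem_iff.mp hvg with h | h
            · exact hv2 h
            · exact hne01 v b₂ h0 hB2 h
          · rcases Sym2.mem_iff.mp hvg with h | h
            · have ha' : a' = ⟨v, hvA'⟩ := Subtype.ext h.symm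
              rw [ha']
            · exact absurd h (hne01 v (m a') h0 (hmB a'))
    · by_cases hv1 : v = b₁
      · refine ⟨s(a₁, b₁), ⟨Or.inl rfl, Sym2.mem_iff.mpr (Or.inr hv1)⟩, ?_⟩
        rintro g ⟨(rfl | rfl | ⟨a, rfl⟩), hvg⟩
        · rfl
        · exfalso
          rcases Sym2.mem_iff.mp hvg with h | h
          · exact hne01 a₂ v hA2 h1 h.symm
          · exact hne_bb (hv1.symm.trans h)
        · exfalso
          rcases Sym2.mem_iff.mp hvg with h | h
          · exact hne01 a.1 v (hA'0 a) h1 h.symm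
          · exact (hm a).2.1 (h.symm.trans hv1)
      · by_cases hv2 : v = b₂
        · refine ⟨s(a₂, b₂), ⟨Or.inr (Or.inl rfl), Sym2.mem_iff.mpr (Or.inr hv2)⟩, ?_⟩
          rintro g ⟨(rfl | rfl | ⟨a, rfl⟩), hvg⟩
          · exfalso
            rcases Sym2.mem_iff.mp hvg with h | h
            · exact hne01 a₁ v hA1 h1 h.symm
            · exact hne_bb (h.symm.trans hv2)
          · rfl
          · exfalso
            rcases Sym2.mem_iff.mp hvg with h | h
            · exact hne01 a.1 v (hA'0 a) h1 h.symm
            · exact (hm a).2.2 (h.symm.trans hv2)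
        · have hvB' : v ∈ B' := by
            rw [hB'def, mem_sdiff]
            refine ⟨(hBmem v).mpr h1, ?_⟩
            simp only [mem_insert, mem_singleton]
            push_neg
            exact ⟨hv1, hv2⟩
          obtain ⟨a, ha⟩ := hsurj v hvB'
          refine ⟨s(a.1, m a), ⟨Or.inr (Or.inr ⟨a, rfl⟩),
            Sym2.mem_iff.mpr (Or.inr ha.symm)⟩, ?_⟩
          rintro g ⟨(rfl | rfl | ⟨a', rfl⟩), hvg⟩
          · exfalso
            rcases Sym2.mem_iff.mp hvg with h | h
            · exact hne01 a₁ v hA1 h1 h.symm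
            · exact hv1 h
          · exfalso
            rcases Sym2.mem_iff.mp hvg with h | h
            · exact hne01 a₂ v hA2 h1 h.symm
            · exact hv2 h
          · rcases Sym2.mem_iff.mp hvg with h | h
            · exact absurd h.symm (hne01 a'.1 v (hA'0 a') h1)
            · have : a' = a := hminj ((h.symm.trans ha.symm).symm ▸ rfl : m a' = m a)
              rw [this]
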